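/- The set W₋ = {(x,y,ẋ,ẏ) : E < E*, W(x,y) ≤ 0} is invariant under the flow of the Hill's lunar problem: if a solution starts in W₋ it remains in W₋ for all times of existence. -/

import Mathlib

noncomputable def V (α x y : ℝ) : ℝ :=
  -((α + 2) / 2) * x ^ 2 - (α + 2) / (x ^ 2 + y ^ 2) ^ (α / 2)

noncomputable def Vx (α x y : ℝ) : ℝ := deriv (fun t => V α t y) x
noncomputable def Vy (α x y : ℝ) : ℝ := deriv (fun t => V α x t) y

noncomputable def W (α x y : ℝ) : ℝ :=
  (α + 2) * (x ^ 2 - α / (x ^ 2 + y ^ 2) ^ (α / 2))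

noncomputable def E (α x y vx vy : ℝ) : ℝ := (1 / 2) * (vx ^ 2 + vy ^ 2) + V α x y

noncomputable def Estar (α : ℝ) : ℝ := -(1 / 2) * (α + 2) ^ 2 * α ^ (-(α / (α + 2)))

lemma hasFDerivAt_Vfull (α : ℝ) (p : ℝ × ℝ) (hp : p.1 ^ 2 + p.2 ^ 2 ≠ 0) :
    ∃ L : ℝ × ℝ →L[ℝ] ℝ, HasFDerivAt (fun q : ℝ × ℝ => V α q.1 q.2) L p := by
  have hpos : 0 < p.1 ^ 2 + p.2 ^ 2 := lt_of_le_of_ne (by positivity) (Ne.symm hp)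
  have h1 : DifferentiableAt ℝ (fun q : ℝ × ℝ => q.1 ^ 2 + q.2 ^ 2) p := by fun_prop
  have h2 : DifferentiableAt ℝ (fun z : ℝ => z ^ (α / 2)) (p.1 ^ 2 + p.2 ^ 2) :=
    (Real.hasDerivAt_rpow_const (Or.inl hp)).differentiableAt
  have h3 : DifferentiableAt ℝ (fun q : ℝ × ℝ => (q.1 ^ 2 + q.2 ^ 2) ^ (α / 2)) p :=
    by have := h2.comp p h1; exact this
  have hne : (p.1 ^ 2 + p.2 ^ 2) ^ (α / 2) ≠ 0 := (Real.rpow_pos_of_pos hpos _).ne'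
  have h4 : DifferentiableAt ℝ (fun q : ℝ × ℝ => V α q.1 q.2) p := by
    have hfun : (fun q : ℝ × ℝ => V α q.1 q.2)
        = fun q : ℝ × ℝ =>
          -((α + 2) / 2) * q.1 ^ 2 - (α + 2) * ((q.1 ^ 2 + q.2 ^ 2) ^ (α / 2))⁻¹ := by
      funext q
      simp [V, div_eq_mul_inv]
    rw [hfun]
    have hfst : DifferentiableAt ℝ (fun q : ℝ × ℝ => -((α + 2) / 2) * q.1 ^ 2) p := by fun_prop
    exact hfst.sub ((differentiableAt_const (α + 2)).mul (h3.inv hne))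
  exact ⟨fderiv ℝ (fun q : ℝ × ℝ => V α q.1 q.2) p, h4.hasFDerivAt⟩

lemma hasDerivAt_V_comp {α : ℝ} {x y : ℝ → ℝ} {vx vy t : ℝ}
    (hx : HasDerivAt x vx t) (hy : HasDerivAt y vy t)
    (h0 : x t ^ 2 + y t ^ 2 ≠ 0) :
    HasDerivAt (fun s => V α (x s) (y s))
      (Vx α (x t) (y t) * vx + Vy α (x t) (y t) * vy) t := by
  obtain ⟨L, hL⟩ := hasFDerivAt_Vfull α (x t, y t) h0
  have hγ : HasDerivAt (fun s => (x s, y s)) (vx, vy) t := hx.prodMk hy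
  have hcomp := hL.comp_hasDerivAt t hγ
  have h1 : HasDerivAt (fun s => V α s (y t)) (L (1, 0)) (x t) := by
    have := hL.comp_hasDerivAt (x t)
      ((hasDerivAt_id (x t)).prodMk (hasDerivAt_const (x t) (y t)))
    simp at this; exact this
  have h2 : HasDerivAt (fun s => V α (x t) s) (L (0, 1)) (y t) := by
    have := hL.comp_hasDerivAt (y t)
      ((hasDerivAt_const (y t) (x t)).prodMk (hasDerivAt_id (y t)))
    exact this
  have hVx : Vx α (x t) (y t) = L (1, 0) := by simp only [Vx]; exact h1.deriv
  have hVy : Vy α (x t) (y t) = L (0, 1) := by simp only [Vy]; exact h2.deriv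
  have hsum : (vx, vy) = vx • ((1 : ℝ), (0 : ℝ)) + vy • ((0 : ℝ), (1 : ℝ)) := by
    simp [Prod.ext_iff]
  have hlin : L (vx, vy) = Vx α (x t) (y t) * vx + Vy α (x t) (y t) * vy := by
    rw [hsum, map_add, map_smul, map_smul, hVx, hVy]
    simp [smul_eq_mul]
    ring
  rw [← hlin]
  exact hcomp

lemma W_ne_zero_of_E_lt {α a b vx vy : ℝ} (hα : 0 < α) (hu : 0 < a ^ 2 + b ^ 2)
    (hE : E α a b vx vy < Estar α) : W α a b ≠ 0 := by
  intro hW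
  have hα2 : (0 : ℝ) < α + 2 := by linarith
  have hupow : 0 < (a ^ 2 + b ^ 2) ^ (α / 2) := Real.rpow_pos_of_pos hu _
  have ha2 : a ^ 2 = α / (a ^ 2 + b ^ 2) ^ (α / 2) := by
    simp only [W] at hW
    rcases mul_eq_zero.mp hW with h | h
    · linarith
    · linarith
  have hVa : V α a b = -((α + 2) ^ 2 / 2) / (a ^ 2 + b ^ 2) ^ (α / 2) := by
    simp only [V]
    set P := (a ^ 2 + b ^ 2) ^ (α / 2) with hPdef
    rw [ha2]
    field_simp
    ring
  have hle : α ≤ (a ^ 2 + b ^ 2) ^ ((α + 2) / 2) := by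
    have h1 : α / (a ^ 2 + b ^ 2) ^ (α / 2) ≤ a ^ 2 + b ^ 2 := by
      rw [← ha2]; nlinarith [sq_nonneg b]
    rw [div_le_iff₀ hupow] at h1
    calc α ≤ (a ^ 2 + b ^ 2) * (a ^ 2 + b ^ 2) ^ (α / 2) := h1
    _ = (a ^ 2 + b ^ 2) ^ ((α + 2) / 2) := by
        rw [show (α + 2) / 2 = 1 + α / 2 by ring, Real.rpow_add hu, Real.rpow_one]
  have hkey : α ^ (α / (α + 2)) ≤ (a ^ 2 + b ^ 2) ^ (α / 2) := by
    have h := Real.rpow_le_rpow hα.le hle (by positivity : (0 : ℝ) ≤ α / (α + 2))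
    rwa [← Real.rpow_mul hu.le, show (α + 2) / 2 * (α / (α + 2)) = α / 2 by
      field_simp] at h
  have hαpow : 0 < α ^ (α / (α + 2)) := Real.rpow_pos_of_pos hα _
  have hinv : ((a ^ 2 + b ^ 2) ^ (α / 2))⁻¹ ≤ (α ^ (α / (α + 2)))⁻¹ := by
    gcongr
  have hEstar : Estar α ≤ V α a b := by
    rw [hVa, Estar, Real.rpow_neg hα.le]
    have h2 : (0 : ℝ) ≤ (α + 2) ^ 2 / 2 := by positivity
    have := mul_le_mul_of_nonneg_left hinv h2
    rw [div_eq_mul_inv (-((α + 2) ^ 2 / 2))]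
    nlinarith
  have hEV : V α a b ≤ E α a b vx vy := by
    simp only [E]; nlinarith [sq_nonneg vx, sq_nonneg vy]
  linarith

/-- Invariance of `W₋ = {E < E*, W ≤ 0}` under the flow of the Hill's lunar problem. -/
theorem Wminus_invariant (α : ℝ) (hα : 0 < α) (I : Set ℝ) (hI : Convex ℝ I)
    (x y x' y' x'' y'' : ℝ → ℝ)
    (hx : ∀ t ∈ I, HasDerivAt x (x' t) t) (hy : ∀ t ∈ I, HasDerivAt y (y' t) t)
    (hx' : ∀ t ∈ I, HasDerivAt x' (x'' t) t) (hy' : ∀ t ∈ I, HasDerivAt y' (y'' t) t)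
    (hne : ∀ t ∈ I, (x t, y t) ≠ (0, 0))
    (heq1 : ∀ t ∈ I, x'' t - 2 * y' t = -Vx α (x t) (y t))
    (heq2 : ∀ t ∈ I, y'' t + 2 * x' t = -Vy α (x t) (y t))
    (t₀ : ℝ) (ht₀ : t₀ ∈ I)
    (hE0 : E α (x t₀) (y t₀) (x' t₀) (y' t₀) < Estar α)
    (hW0 : W α (x t₀) (y t₀) ≤ 0) :
    ∀ t ∈ I, E α (x t) (y t) (x' t) (y' t) < Estar α ∧ W α (x t) (y t) ≤ 0 := by
  have hupos : ∀ t ∈ I, 0 < x t ^ 2 + y t ^ 2 := by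
    intro t ht
    have h : x t ≠ 0 ∨ y t ≠ 0 := by
      by_contra h
      push_neg at h
      exact hne t ht (by simp [h.1, h.2])
    rcases h with h | h
    · positivity
    · positivity
  -- energy conservation
  have hE' : ∀ t ∈ I, HasDerivAt (fun s => E α (x s) (y s) (x' s) (y' s)) 0 t := by
    intro t ht
    have hV := hasDerivAt_V_comp (α := α) (hx t ht) (hy t ht) (hupos t ht).ne'
    have hk := (((hx' t ht).pow 2).add ((hy' t ht).pow 2)).const_mul ((1 : ℝ) / 2)
    have htot := hk.add hV
    have hfun : (fun s => E α (x s) (y s) (x' s) (y' s))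
        = fun s => (1 / 2 : ℝ) * (x' s ^ 2 + y' s ^ 2) + V α (x s) (y s) := by
      funext s; simp [E]
    rw [hfun]
    have e1 := heq1 t ht
    have e2 := heq2 t ht
    have key : (0 : ℝ) = 1 / 2 * (((2 : ℕ) : ℝ) * x' t ^ (2 - 1) * x'' t + ((2 : ℕ) : ℝ) * y' t ^ (2 - 1) * y'' t) +
        (Vx α (x t) (y t) * x' t + Vy α (x t) (y t) * y' t) := by
      norm_num
      linear_combination (-(x' t)) * e1 + (-(y' t)) * e2
    rw [← key] at htot
    exact htot
  have hconst : ∀ t ∈ I, E α (x t) (y t) (x' t) (y' t) = E α (x t₀) (y t₀) (x' t₀) (y' t₀) := by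
    intro t ht
    have hb := Convex.norm_image_sub_le_of_norm_hasDerivWithin_le
      (f' := fun _ : ℝ => (0 : ℝ)) (C := 0)
      (fun s hs => (hE' s hs).hasDerivWithinAt) (fun s _ => by simp) hI ht₀ ht
    have h0 : ‖E α (x t) (y t) (x' t) (y' t) - E α (x t₀) (y t₀) (x' t₀) (y' t₀)‖ ≤ 0 := by
      simpa using hb
    exact sub_eq_zero.mp (norm_le_zero_iff.mp h0)
  have hElt : ∀ t ∈ I, E α (x t) (y t) (x' t) (y' t) < Estar α := by
    intro t ht; rw [hconst t ht]; exact hE0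
  have hWne : ∀ s ∈ I, W α (x s) (y s) ≠ 0 := fun s hs =>
    W_ne_zero_of_E_lt hα (hupos s hs) (hElt s hs)
  have hcont : ContinuousOn (fun t => W α (x t) (y t)) I := by
    intro t ht
    apply ContinuousAt.continuousWithinAt
    have hxc : ContinuousAt x t := (hx t ht).continuousAt
    have hyc : ContinuousAt y t := (hy t ht).continuousAt
    have huc : ContinuousAt (fun s => x s ^ 2 + y s ^ 2) t := (hxc.pow 2).add (hyc.pow 2)
    have hrpow : ContinuousAt (fun s => (x s ^ 2 + y s ^ 2) ^ (α / 2)) t :=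
      huc.rpow_const (Or.inl (hupos t ht).ne')
    have hrne : (x t ^ 2 + y t ^ 2) ^ (α / 2) ≠ 0 :=
      (Real.rpow_pos_of_pos (hupos t ht) _).ne'
    have : ContinuousAt (fun s => W α (x s) (y s)) t := by
      simp only [W]
      exact continuousAt_const.mul ((hxc.pow 2).sub (continuousAt_const.div hrpow hrne))
    exact this
  intro t ht
  refine ⟨hElt t ht, ?_⟩
  have hWt₀ : W α (x t₀) (y t₀) < 0 := lt_of_le_of_ne hW0 (hWne t₀ ht₀)
  by_contra hpos
  push_neg at hpos
  rcases le_total t₀ t with hle | hle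
  · have hsub : Set.Icc t₀ t ⊆ I := hI.ordConnected.out ht₀ ht
    have h0 : (0 : ℝ) ∈ Set.Icc (W α (x t₀) (y t₀)) (W α (x t) (y t)) := ⟨hWt₀.le, hpos.le⟩
    obtain ⟨s, hs, hs0⟩ := intermediate_value_Icc hle (hcont.mono hsub) h0
    exact hWne s (hsub hs) hs0
  · have hsub : Set.Icc t t₀ ⊆ I := hI.ordConnected.out ht ht₀
    have h0 : (0 : ℝ) ∈ Set.Icc (W α (x t₀) (y t₀)) (W α (x t) (y t)) := ⟨hWt₀.le, hpos.le⟩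
    obtain ⟨s, hs, hs0⟩ := intermediate_value_Icc' hle (hcont.mono hsub) h0
    exact hWne s (hsub hs) hs0
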